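/- Let n ≥ 1 and let x and x̃ be Dyck paths of length 2n. If K_j(x) = K_j(x̃) for all j = 1, …, n, then x = x̃; that is, the map x ↦ (K_1(x), …, K_n(x)) is injective on Dyck paths of length 2n. (Uniqueness part of Lemma 2) -/

import Mathlib

/-- The path associated with an ordering `ω` of the `2n` socks `{1,…,n} × {0,1}`:
`x 0 = 0`, and the path steps up when a new sock type is drawn and down when the
drawn type has already occurred. -/
def sockPath (n : ℕ) (ω : Fin (2 * n) → Fin n × Bool) : ℕ → ℤ
  | 0 => 0
  | m + 1 =>
    sockPath n ω m +
      if h : m < 2 * n then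
        if ∃ i : Fin (2 * n), (i : ℕ) < m ∧ (ω i).1 = (ω ⟨m, h⟩).1 then -1 else 1
      else 0

/-- `Lseq x j` is `L_j(x)`: `L_0(x) = 0` and
`L_j(x) = min { i > L_{j-1}(x) : x (i+1) = x i - 1 }`. -/
noncomputable def Lseq (x : ℕ → ℤ) : ℕ → ℕ
  | 0 => 0
  | j + 1 => sInf {i : ℕ | Lseq x j < i ∧ x (i + 1) = x i - 1}

/-- `Kseq x j` is `K_j(x) = x (L_j(x))`. -/
noncomputable def Kseq (x : ℕ → ℤ) (j : ℕ) : ℤ := x (Lseq x j)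

/-- A Dyck path of length `2n`: a tuple `(x 1, …, x (2n))` of integers with `x 1 = 1`,
`|x (i+1) - x i| = 1` for `1 ≤ i < 2n`, `x i ≥ 0` for `1 ≤ i ≤ 2n - 1`, and `x (2n) = 0`. -/
def IsDyckPath (n : ℕ) (x : ℕ → ℤ) : Prop :=
  x 1 = 1 ∧ (∀ i, 1 ≤ i → i < 2 * n → |x (i + 1) - x i| = 1) ∧
    (∀ i, 1 ≤ i → i ≤ 2 * n - 1 → 0 ≤ x i) ∧ x (2 * n) = 0

/-- Uniqueness part of Lemma 2: two Dyck paths of length `2n` with the same values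
`K_1, …, K_n` agree (on all the indices `1, …, 2n`); i.e. the map
`x ↦ (K_1(x), …, K_n(x))` is injective on Dyck paths of length `2n`. -/
lemma uprun (x : ℕ → ℤ) (a b : ℕ) (h : ∀ i, a ≤ i → i < b → x (i+1) = x i + 1) :
    ∀ i, a ≤ i → i ≤ b → x i = x a + ((i : ℤ) - (a : ℤ)) := by
  intro i hi
  induction i, hi using Nat.le_induction with
  | base => intro _; simp
  | succ i hi ih =>
    intro hib
    have h1 := h i hi (by omega)
    have h2 := ih (by omega)
    push_cast at h2 ⊢
    linarith

lemma dropb (x : ℕ → ℤ) (a b : ℕ) (h : ∀ i, a ≤ i → i < b → x i - 1 ≤ x (i+1)) :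
    ∀ i, a ≤ i → i ≤ b → x a - ((i : ℤ) - (a : ℤ)) ≤ x i := by
  intro i hi
  induction i, hi using Nat.le_induction with
  | base => intro _; simp
  | succ i hi ih =>
    intro hib
    have h1 := h i hi (by omega)
    have h2 := ih (by omega)
    push_cast at h2 ⊢
    linarith

lemma stepLemma (n : ℕ) (x : ℕ → ℤ) (hx : IsDyckPath n x) (j m : ℕ)
    (hj1 : 1 ≤ j) (hjn : j ≤ n) (hmb : m + 2 ≤ n + j)
    (hmv : x (m+1) = (m : ℤ) + 1 - 2*j + 2) (hm0 : 0 ≤ x (m+1)) :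
    m < sInf {i : ℕ | m < i ∧ x (i+1) = x i - 1} ∧
    sInf {i : ℕ | m < i ∧ x (i+1) = x i - 1} + 1 ≤ 2*n ∧
    x (sInf {i : ℕ | m < i ∧ x (i+1) = x i - 1} + 1)
      = x (sInf {i : ℕ | m < i ∧ x (i+1) = x i - 1}) - 1 ∧
    (∀ i, m < i → i ≤ sInf {i : ℕ | m < i ∧ x (i+1) = x i - 1} → x i = (i:ℤ) - 2*j + 2) ∧
    1 ≤ x (sInf {i : ℕ | m < i ∧ x (i+1) = x i - 1}) ∧
    x (sInf {i : ℕ | m < i ∧ x (i+1) = x i - 1}) ≤ (n:ℤ) - j + 1 := by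
  obtain ⟨h1, hstep, hpos, hend⟩ := hx
  set S := {i : ℕ | m < i ∧ x (i+1) = x i - 1} with hS
  -- each step is ±1
  have hpm : ∀ i, 1 ≤ i → i < 2*n → x (i+1) = x i + 1 ∨ x (i+1) = x i - 1 := by
    intro i h1i h2i
    have := hstep i h1i h2i
    rcases abs_eq (by norm_num : (0:ℤ) ≤ 1) |>.mp this with h' | h'
    · left; linarith
    · right; linarith
  have hm2n : m + 1 < 2 * n := by omega
  -- S has an element < 2n
  have hwit : ∃ w, w ∈ S ∧ w < 2*n := by
    by_contra hc
    push_neg at hc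
    have hup : ∀ i, m + 1 ≤ i → i < 2*n → x (i+1) = x i + 1 := by
      intro i h1i h2i
      rcases hpm i (by omega) h2i with h' | h'
      · exact h'
      · exact absurd (hc i ⟨by omega, h'⟩) (by omega)
    have := uprun x (m+1) (2*n) hup (2*n) (by omega) le_rfl
    rw [hend] at this
    push_cast at this
    omega
  obtain ⟨w, hwS, hw2n⟩ := hwit
  have hSne : S.Nonempty := ⟨w, hwS⟩
  have hLmem : sInf S ∈ S := Nat.sInf_mem hSne
  set L := sInf S with hLdef
  have hLw : L ≤ w := Nat.sInf_le hwS
  have hL2n : L + 1 ≤ 2*n := by omega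
  have hmL : m < L := hLmem.1
  have hdown : x (L+1) = x L - 1 := hLmem.2
  -- steps between m and L are up
  have hup : ∀ i, m + 1 ≤ i → i < L → x (i+1) = x i + 1 := by
    intro i h1i h2i
    rcases hpm i (by omega) (by omega) with h' | h'
    · exact h'
    · have hle : sInf S ≤ i := Nat.sInf_le (show i ∈ S from ⟨by omega, h'⟩)
      omega
  have hvals : ∀ i, m < i → i ≤ L → x i = (i:ℤ) - 2*j + 2 := by
    intro i h1i h2i
    have := uprun x (m+1) L hup i (by omega) h2i
    rw [hmv] at this
    push_cast at this ⊢
    linarith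
  have hxL : x L = (L:ℤ) - 2*j + 2 := hvals L hmL le_rfl
  have hK1 : 1 ≤ x L := by
    rcases Nat.lt_or_ge (L+1) (2*n) with h' | h'
    · have := hpos (L+1) (by omega) (by omega)
      linarith
    · have hLL : L + 1 = 2*n := by omega
      rw [hLL, hend] at hdown
      linarith
  have hK2 : x L ≤ (n:ℤ) - j + 1 := by
    have hdr : ∀ i, L ≤ i → i < 2*n → x i - 1 ≤ x (i+1) := by
      intro i h1i h2i
      rcases hpm i (by omega) h2i with h' | h' <;> linarith
    have := dropb x L (2*n) hdr (2*n) (by omega) le_rfl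
    rw [hend] at this
    push_cast at this
    have hLcast : (L:ℤ) = x L + 2*j - 2 := by linarith
    have hLn : (L:ℤ) ≤ 2*n := by exact_mod_cast Nat.le_of_lt_succ (by omega)
    linarith
  exact ⟨hmL, hL2n, hdown, hvals, hK1, hK2⟩

lemma keyLemma (n : ℕ) (hn : 1 ≤ n) (x : ℕ → ℤ) (hx : IsDyckPath n x) :
    ∀ j, 1 ≤ j → j ≤ n →
      ((Lseq x j : ℤ) = Kseq x j + 2*j - 2) ∧ 1 ≤ Kseq x j ∧ Kseq x j ≤ (n:ℤ) - j + 1 ∧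
      Lseq x (j-1) < Lseq x j ∧
      x (Lseq x j + 1) = x (Lseq x j) - 1 ∧
      (∀ i, Lseq x (j-1) < i → i ≤ Lseq x j → x i = (i:ℤ) - 2*j + 2) := by
  intro j hj
  induction j, hj using Nat.le_induction with
  | base =>
    intro hjn
    have h0 : Lseq x 0 = 0 := rfl
    have hL1 : Lseq x 1 = sInf {i : ℕ | Lseq x 0 < i ∧ x (i+1) = x i - 1} := rfl
    have hs := stepLemma n x hx 1 (Lseq x 0) le_rfl hjn (by omega)
      (by rw [h0]; push_cast; simpa using hx.1) (by rw [h0]; rw [hx.1]; norm_num)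
    rw [← hL1] at hs
    obtain ⟨ha, hb, hc, hd, he, hf⟩ := hs
    have hK : Kseq x 1 = x (Lseq x 1) := rfl
    have hxL : x (Lseq x 1) = (Lseq x 1 : ℤ) - 2*1 + 2 := hd (Lseq x 1) (by omega) le_rfl
    refine ⟨by rw [hK, hxL]; push_cast; ring, by rw [hK, hxL]; push_cast; push_cast at he; linarith,
      by rw [hK]; push_cast; push_cast at hf; linarith, by simpa [h0] using ha, hc, ?_⟩
    intro i h1i h2i
    exact hd i (by simpa [h0] using h1i) h2i
  | succ j hj ih =>
    intro hjn
    obtain ⟨ia, ib, ic, id', ie, if'⟩ := ih (by omega)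
    set m := Lseq x j with hm
    have hL1 : Lseq x (j+1) = sInf {i : ℕ | Lseq x j < i ∧ x (i+1) = x i - 1} := rfl
    have hKm : Kseq x j = x m := rfl
    have hxm : x m = (m:ℤ) - 2*j + 2 := by rw [← hKm]; push_cast at ia ⊢; linarith
    have hxm1 : x (m+1) = (m:ℤ) + 1 - 2*(j+1:ℕ) + 2 := by
      rw [ie, hxm]; push_cast; ring
    have hmb : m + 2 ≤ n + (j+1) := by
      have : (m:ℤ) = Kseq x j + 2*j - 2 := ia
      have h2 : (m:ℤ) + 2 ≤ (n:ℤ) + (j+1) := by linarith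
      exact_mod_cast h2
    have hm0 : 0 ≤ x (m+1) := by rw [ie, ← hKm]; linarith
    have hs := stepLemma n x hx (j+1) m (by omega) hjn hmb hxm1 hm0
    rw [← hL1] at hs
    obtain ⟨ha, hb, hc, hd, he, hf⟩ := hs
    have hK : Kseq x (j+1) = x (Lseq x (j+1)) := rfl
    have hxL : x (Lseq x (j+1)) = (Lseq x (j+1) : ℤ) - 2*(j+1:ℕ) + 2 :=
      hd (Lseq x (j+1)) ha le_rfl
    have hj1 : (j+1) - 1 = j := by omega
    refine ⟨by rw [hK, hxL]; push_cast; ring,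
      by rw [hK, hxL]; push_cast; push_cast at he; linarith,
      by rw [hK]; push_cast; push_cast at hf; linarith,
      by rw [hj1]; exact ha, hc, ?_⟩
    intro i h1i h2i
    rw [hj1] at h1i
    have := hd i h1i h2i
    push_cast at this ⊢
    linarith

theorem stmt_5 (n : ℕ) (hn : 1 ≤ n) (x y : ℕ → ℤ)
    (hx : IsDyckPath n x) (hy : IsDyckPath n y)
    (h : ∀ j, 1 ≤ j → j ≤ n → Kseq x j = Kseq y j) :
    ∀ i, 1 ≤ i → i ≤ 2 * n → x i = y i := by
  have kx := keyLemma n hn x hx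
  have ky := keyLemma n hn y hy
  -- the L sequences agree
  have hL : ∀ j, 1 ≤ j → j ≤ n → Lseq x j = Lseq y j := by
    intro j h1 h2
    have e1 := (kx j h1 h2).1
    have e2 := (ky j h1 h2).1
    have := h j h1 h2
    have : (Lseq x j : ℤ) = (Lseq y j : ℤ) := by rw [e1, e2, this]
    exact_mod_cast this
  -- L_n = 2n - 1
  have hLn : Lseq x n = 2*n - 1 := by
    obtain ⟨e1, e2, e3, _, _, _⟩ := kx n hn le_rfl
    have hKn : Kseq x n = 1 := by linarith
    have : (Lseq x n : ℤ) = 2*n - 1 := by rw [e1, hKn]; ring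
    omega
  intro i h1i h2i
  rcases Nat.lt_or_ge i (2*n) with hlt | hge
  · -- i ≤ 2n - 1 = Lseq x n
    have hiLn : i ≤ Lseq x n := by omega
    have hTne : (sInf {j : ℕ | 1 ≤ j ∧ j ≤ n ∧ i ≤ Lseq x j}) ∈
        {j : ℕ | 1 ≤ j ∧ j ≤ n ∧ i ≤ Lseq x j} :=
      Nat.sInf_mem ⟨n, hn, le_rfl, hiLn⟩
    set j0 := sInf {j : ℕ | 1 ≤ j ∧ j ≤ n ∧ i ≤ Lseq x j} with hj0
    obtain ⟨hj01, hj0n, hj0i⟩ := hTne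
    have hprev : Lseq x (j0 - 1) < i := by
      rcases Nat.eq_or_lt_of_le hj01 with heq | hlt2
      · have : Lseq x 0 = 0 := rfl
        rw [← heq]; simp [this]; omega
      · have hnot : j0 - 1 ∉ {j : ℕ | 1 ≤ j ∧ j ≤ n ∧ i ≤ Lseq x j} :=
          Nat.notMem_of_lt_sInf (by omega)
        simp only [Set.mem_setOf_eq, not_and, not_le] at hnot
        exact hnot (by omega) (by omega)
    have hxv := (kx j0 hj01 hj0n).2.2.2.2.2 i hprev hj0i
    have hprevL : Lseq y (j0 - 1) = Lseq x (j0 - 1) := by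
      rcases Nat.eq_or_lt_of_le hj01 with heq | hlt2
      · rw [← heq]; rfl
      · exact (hL (j0-1) (by omega) (by omega)).symm
    have hyv := (ky j0 hj01 hj0n).2.2.2.2.2 i (by rw [hprevL]; exact hprev)
      (by rw [← hL j0 hj01 hj0n]; exact hj0i)
    rw [hxv, hyv]
  · have hi2n : i = 2*n := by omega
    rw [hi2n, hx.2.2.2, hy.2.2.2]
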